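/- arXiv:1409.5378 — 5 statements merged into one kernel-verified Lean document; each statement's English description precedes it below -/
import Mathlib

section
/- Fix z₀ ∈ Δ with z₀ ≠ 0 and define f₀(z) = (1−|z₀|²)(−1/conj(z₀))[z + (1/conj(z₀))Log(1−conj(z₀)z)], where Log is the principal branch of the logarithm. Then f₀ ∈ 𝒵₀^{(0,1)}, f₀''(z) = (1−|z₀|²)/(1−conj(z₀)z)² for all z ∈ Δ, and the function F₀(z) = (1−|z|²)f₀''(z) satisfies F₀(z₀) = 1 and |F₀(z)| < 1 for every z ∈ Δ with z ≠ z₀; in particular ‖f₀‖_𝒵 = 1. -/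
open Complex MeasureTheory

noncomputable section

/-- The open unit disc in the complex plane. -/
def unitDisc : Set ℂ := Metric.ball 0 1

/-- `(1-|z|²)|f''(z)| → 0` as `|z| → 1⁻`. -/
def ZygVanish (f : ℂ → ℂ) : Prop :=
  ∀ ε > 0, ∃ r : ℝ, r < 1 ∧ ∀ z : ℂ, r < ‖z‖ → ‖z‖ < 1 →
    (1 - ‖z‖ ^ 2) * ‖deriv (deriv f) z‖ < ε

/-- Membership in the little Zygmund space `𝒵₀`: `f` is analytic (holomorphic) on the open
unit disc, continuous on the closed unit disc, and `(1-|z|²)|f''(z)| → 0` as `|z| → 1⁻`. -/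
def MemZ0 (f : ℂ → ℂ) : Prop :=
  DifferentiableOn ℂ f unitDisc ∧ ContinuousOn f (Metric.closedBall 0 1) ∧ ZygVanish f

/-- Membership in the subspace `𝒵₀^{(0,1)} = {f ∈ 𝒵₀ : f(0) = f'(0) = 0}`. -/
def MemZ01 (f : ℂ → ℂ) : Prop :=
  MemZ0 f ∧ f 0 = 0 ∧ deriv f 0 = 0

/-- `sup_{|z|<1} (1-|z|²)|f''(z)|`, the norm of `𝒵₀^{(0,1)}`. -/
noncomputable def zygSup (f : ℂ → ℂ) : ℝ :=
  sSup ((fun z => (1 - ‖z‖ ^ 2) * ‖deriv (deriv f) z‖) '' unitDisc)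

/-- The Zygmund norm `‖f‖_𝒵 = |f(0)| + |f'(0)| + sup_{|z|<1}(1-|z|²)|f''(z)|`. -/
noncomputable def zygNorm (f : ℂ → ℂ) : ℝ :=
  ‖f 0‖ + ‖deriv f 0‖ + zygSup f

/-- A disc automorphism: `σ(z) = λ(z-a)/(1 - conj(a) z)` on `Δ`, with `|λ| = 1`, `|a| < 1`. -/
def IsDiscAut (σ : ℂ → ℂ) : Prop :=
  ∃ lam a : ℂ, ‖lam‖ = 1 ∧ ‖a‖ < 1 ∧
    ∀ z ∈ unitDisc, σ z = lam * (z - a) / (1 - (starRingEnd ℂ) a * z)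

/-- `∫₀^z g(ξ) dξ`, the integral taken along the segment from `0` to `z`. -/
noncomputable def segIntegral (g : ℂ → ℂ) (z : ℂ) : ℂ :=
  z * ∫ t in (0:ℝ)..1, g ((t : ℂ) * z)

/-- For `z₀ ∈ Δ`, `z₀ ≠ 0`, the function
`f₀(z) = (1-|z₀|²)(-1/conj(z₀))[z + (1/conj(z₀)) Log(1 - conj(z₀) z)]` belongs to
`𝒵₀^{(0,1)}`, has `f₀''(z) = (1-|z₀|²)/(1-conj(z₀)z)²`, and `F₀(z) = (1-|z|²)f₀''(z)`
satisfies `F₀(z₀) = 1` and `|F₀(z)| < 1` for `z ∈ Δ`, `z ≠ z₀`; in particular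
`‖f₀‖_𝒵 = 1`. -/
theorem stmt_6 (z₀ : ℂ) (hz₀ : z₀ ∈ unitDisc) (hz₀0 : z₀ ≠ 0)
    (f₀ : ℂ → ℂ)
    (hf₀ : ∀ z : ℂ, f₀ z = (1 - (‖z₀‖ : ℂ) ^ 2) * (-(1 / (starRingEnd ℂ) z₀)) *
      (z + (1 / (starRingEnd ℂ) z₀) * Complex.log (1 - (starRingEnd ℂ) z₀ * z))) :
    MemZ01 f₀ ∧
    (∀ z ∈ unitDisc, deriv (deriv f₀) z =
      (1 - (‖z₀‖ : ℂ) ^ 2) / (1 - (starRingEnd ℂ) z₀ * z) ^ 2) ∧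
    (1 - (‖z₀‖ : ℂ) ^ 2) * deriv (deriv f₀) z₀ = 1 ∧
    (∀ z ∈ unitDisc, z ≠ z₀ →
      ‖(1 - (‖z‖ : ℂ) ^ 2) * deriv (deriv f₀) z‖ < 1) ∧
    zygNorm f₀ = 1 := by
  have hz₀1 : ‖z₀‖ < 1 := by
    simpa [unitDisc, Complex.dist_eq] using hz₀
  -- casting helper
  have hcastR : ∀ z : ℂ, ‖z‖ ≤ 1 →
      ‖(1 : ℂ) - (‖z‖ : ℂ) ^ 2‖ = 1 - ‖z‖ ^ 2 := by
    intro z hz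
    have h : (1 : ℂ) - (‖z‖ : ℂ) ^ 2 = ((1 - ‖z‖ ^ 2 : ℝ) : ℂ) := by
      push_cast; ring
    rw [h, Complex.norm_real, Real.norm_eq_abs, _root_.abs_of_nonneg]
    nlinarith [norm_nonneg z]
  set a : ℂ := (starRingEnd ℂ) z₀ with ha_def
  have ha1 : ‖a‖ < 1 := by rwa [ha_def, Complex.norm_conj]
  have ha0 : a ≠ 0 := by
    simp only [ha_def, ne_eq, map_eq_zero]
    exact hz₀0
  set C : ℂ := (1 - (‖z₀‖ : ℂ) ^ 2) * (-(1 / a)) with hC_def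
  set S : Set ℂ := {z | ‖a * z‖ < 1} with hS_def
  have hSopen : IsOpen S :=
    isOpen_lt (continuous_norm.comp (continuous_const.mul continuous_id)) continuous_const
  have hne : ∀ z ∈ S, 1 - a * z ≠ 0 := by
    intro z hz h
    have h1 : a * z = 1 := by linear_combination -h
    have hz' : ‖a * z‖ < 1 := hz
    rw [h1] at hz'
    simp at hz'
  have hslit : ∀ z ∈ S, 1 - a * z ∈ Complex.slitPlane := by
    intro z hz
    rw [Complex.mem_slitPlane_iff]
    left
    have h1 : (a * z).re ≤ ‖a * z‖ := Complex.re_le_norm _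
    have h2 : ‖a * z‖ < 1 := hz
    simp only [Complex.sub_re, Complex.one_re]
    linarith
  have hd1 : ∀ z ∈ S, HasDerivAt f₀ (C * (1 - (1 - a * z)⁻¹)) z := by
    intro z hz
    have h1 : HasDerivAt (fun w : ℂ => 1 - a * w) (-a) z := by
      simpa using ((hasDerivAt_id z).const_mul a).const_sub 1
    have hlog : HasDerivAt (fun w => Complex.log (1 - a * w)) (-a / (1 - a * z)) z :=
      h1.clog (hslit z hz)
    have h2 : HasDerivAt (fun w : ℂ => w + (1 / a) * Complex.log (1 - a * w))
        (1 + (1 / a) * (-a / (1 - a * z))) z :=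
      (hasDerivAt_id z).add (hlog.const_mul (1 / a))
    have h3 := h2.const_mul C
    have heq : f₀ = fun w : ℂ => C * (w + (1 / a) * Complex.log (1 - a * w)) := by
      funext w; rw [hf₀ w]
    rw [heq]
    refine h3.congr_deriv ?_
    have h4 := hne z hz
    field_simp
    ring
  have hd2 : ∀ z ∈ S, HasDerivAt (fun w : ℂ => C * (1 - (1 - a * w)⁻¹))
      ((1 - (‖z₀‖ : ℂ) ^ 2) / (1 - a * z) ^ 2) z := by
    intro z hz
    have h1 : HasDerivAt (fun w : ℂ => 1 - a * w) (-a) z := by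
      simpa using ((hasDerivAt_id z).const_mul a).const_sub 1
    have hinv : HasDerivAt (fun w : ℂ => (1 - a * w)⁻¹) (-(-a) / (1 - a * z) ^ 2) z :=
      h1.inv (hne z hz)
    have h2 := ((hasDerivAt_const z (1 : ℂ)).sub hinv).const_mul C
    refine h2.congr_deriv ?_
    have h4 := hne z hz
    rw [hC_def]
    field_simp
    ring
  have hD1 : ∀ z ∈ S, deriv f₀ z = C * (1 - (1 - a * z)⁻¹) := fun z hz => (hd1 z hz).deriv
  have hD2 : ∀ z ∈ S, deriv (deriv f₀) z = (1 - (‖z₀‖ : ℂ) ^ 2) / (1 - a * z) ^ 2 := by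
    intro z hz
    have hev : deriv f₀ =ᶠ[nhds z] fun w => C * (1 - (1 - a * w)⁻¹) :=
      Filter.eventuallyEq_of_mem (hSopen.mem_nhds hz) fun w hw => hD1 w hw
    rw [hev.deriv_eq]
    exact (hd2 z hz).deriv
  have hcb_sub : Metric.closedBall (0 : ℂ) 1 ⊆ S := by
    intro z hz
    simp only [Metric.mem_closedBall, Complex.dist_eq, sub_zero] at hz
    show ‖a * z‖ < 1
    rw [norm_mul]
    calc ‖a‖ * ‖z‖ ≤ ‖a‖ * 1 :=
          mul_le_mul_of_nonneg_left hz (norm_nonneg a)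
      _ < 1 := by rwa [mul_one]
  have hb_sub : unitDisc ⊆ S := fun z hz => hcb_sub (Metric.ball_subset_closedBall hz)
  have hD2abs : ∀ z : ℂ, z ∈ S → ‖deriv (deriv f₀) z‖ =
      (1 - ‖z₀‖ ^ 2) / ‖1 - a * z‖ ^ 2 := by
    intro z hz
    rw [hD2 z hz, norm_div, norm_pow]
    congr 1
    exact hcastR z₀ hz₀1.le
  have key : ∀ z : ℂ, Complex.normSq (1 - a * z) =
      (1 - Complex.normSq z) * (1 - Complex.normSq z₀) + Complex.normSq (z - z₀) := by
    intro z
    simp only [ha_def, Complex.normSq_apply, Complex.sub_re, Complex.sub_im, Complex.one_re,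
      Complex.one_im, Complex.mul_re, Complex.mul_im, Complex.conj_re, Complex.conj_im]
    ring
  have habsz₀ : z₀ ∈ S := hb_sub hz₀
  have haz₀ : a * z₀ = (‖z₀‖ : ℂ) ^ 2 := by
    rw [ha_def, mul_comm, Complex.mul_conj, ← Complex.sq_norm]
    push_cast; ring
  have hcast_ne : (1 : ℂ) - (‖z₀‖ : ℂ) ^ 2 ≠ 0 := by
    have h : (1 : ℂ) - (‖z₀‖ : ℂ) ^ 2 = ((1 - ‖z₀‖ ^ 2 : ℝ) : ℂ) := by
      push_cast; ring
    rw [h]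
    simp only [ne_eq, Complex.ofReal_eq_zero]
    intro h'
    nlinarith [norm_nonneg z₀]
  have hval : (1 - (‖z₀‖ : ℂ) ^ 2) * deriv (deriv f₀) z₀ = 1 := by
    rw [hD2 z₀ habsz₀, haz₀]
    field_simp
  have hstrict : ∀ z ∈ unitDisc, z ≠ z₀ →
      ‖(1 - (‖z‖ : ℂ) ^ 2) * deriv (deriv f₀) z‖ < 1 := by
    intro z hz hne'
    have hz1 : ‖z‖ < 1 := by simpa [unitDisc, Complex.dist_eq] using hz
    have hS : z ∈ S := hb_sub hz
    rw [norm_mul, hD2abs z hS, hcastR z hz1.le]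
    have hden : 0 < ‖1 - a * z‖ ^ 2 := by
      have h0 : 0 < ‖1 - a * z‖ := norm_pos_iff.mpr (hne z hS)
      positivity
    rw [← mul_div_assoc, div_lt_one hden]
    have hkey := key z
    have hpos : 0 < Complex.normSq (z - z₀) := by
      rw [Complex.normSq_pos]
      exact sub_ne_zero.mpr hne'
    have h1 : ‖1 - a * z‖ ^ 2 = Complex.normSq (1 - a * z) := Complex.sq_norm _
    have h2 : ‖z‖ ^ 2 = Complex.normSq z := Complex.sq_norm z
    have h3 : ‖z₀‖ ^ 2 = Complex.normSq z₀ := Complex.sq_norm z₀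
    rw [h1, h2, h3, hkey]
    linarith
  have hM : 0 < (1 - ‖z₀‖ ^ 2) / (1 - ‖z₀‖) ^ 2 := by
    have h0 : (0:ℝ) ≤ ‖z₀‖ := norm_nonneg z₀
    have h1 : 0 < 1 - ‖z₀‖ := by linarith
    have h2 : 0 < 1 - ‖z₀‖ ^ 2 := by nlinarith
    positivity
  set M : ℝ := (1 - ‖z₀‖ ^ 2) / (1 - ‖z₀‖) ^ 2 with hM_def
  have hbound : ∀ z : ℂ, ‖z‖ ≤ 1 → ‖deriv (deriv f₀) z‖ ≤ M := by
    intro z hz1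
    have hS : z ∈ S := hcb_sub (by simpa [Metric.mem_closedBall, Complex.dist_eq] using hz1)
    rw [hD2abs z hS, hM_def]
    have hlow : 1 - ‖z₀‖ ≤ ‖1 - a * z‖ := by
      have h1 : ‖a * z‖ ≤ ‖z₀‖ := by
        rw [norm_mul]
        calc ‖a‖ * ‖z‖ ≤ ‖a‖ * 1 :=
              mul_le_mul_of_nonneg_left hz1 (norm_nonneg a)
          _ = ‖z₀‖ := by rw [mul_one, ha_def, Complex.norm_conj]
      have hns : ‖(1 : ℂ)‖ - ‖a * z‖ ≤ ‖1 - a * z‖ := norm_sub_norm_le _ _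
      simp only [norm_one] at hns
      linarith
    have hl0 : 0 < 1 - ‖z₀‖ := by linarith
    have hnum : 0 ≤ 1 - ‖z₀‖ ^ 2 := by nlinarith [norm_nonneg z₀]
    apply div_le_div_of_nonneg_left hnum (by positivity)
    exact pow_le_pow_left₀ hl0.le hlow 2
  have hf00 : f₀ 0 = 0 := by rw [hf₀ 0]; simp
  have hdf00 : deriv f₀ 0 = 0 := by
    have h0S : (0 : ℂ) ∈ S := by show ‖a * 0‖ < 1; simp
    rw [hD1 0 h0S]; simp
  have hmem : MemZ01 f₀ := by
    refine ⟨⟨?_, ?_, ?_⟩, hf00, hdf00⟩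
    · exact fun z hz => ((hd1 z (hb_sub hz)).differentiableAt).differentiableWithinAt
    · exact fun z hz => ((hd1 z (hcb_sub hz)).differentiableAt).continuousAt.continuousWithinAt
    · intro ε hε
      have hpos : 0 < ε / (2 * M) := by positivity
      refine ⟨1 - ε / (2 * M), by linarith, ?_⟩
      intro z hzr hz1
      have hb := hbound z hz1.le
      have h0 : 0 ≤ ‖z‖ := norm_nonneg z
      have h1 : 1 - ‖z‖ ^ 2 ≤ 2 * (1 - ‖z‖) := by nlinarith
      have h2 : 1 - ‖z‖ < ε / (2 * M) := by linarith
      have h3 : 0 ≤ ‖deriv (deriv f₀) z‖ := norm_nonneg _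
      have h4 : 0 < 1 - ‖z‖ ^ 2 := by nlinarith
      calc (1 - ‖z‖ ^ 2) * ‖deriv (deriv f₀) z‖
          ≤ (1 - ‖z‖ ^ 2) * M := by nlinarith
        _ ≤ 2 * (1 - ‖z‖) * M := by nlinarith
        _ < 2 * (ε / (2 * M)) * M := by nlinarith
        _ = ε := by field_simp
  have hval_abs : (1 - ‖z₀‖ ^ 2) * ‖deriv (deriv f₀) z₀‖ = 1 := by
    have h := congrArg norm hval
    rw [norm_mul, norm_one, hcastR z₀ hz₀1.le] at h
    exact h
  have hle1 : ∀ z ∈ unitDisc,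
      (1 - ‖z‖ ^ 2) * ‖deriv (deriv f₀) z‖ ≤ 1 := by
    intro z hz
    have hz1 : ‖z‖ < 1 := by simpa [unitDisc, Complex.dist_eq] using hz
    by_cases h : z = z₀
    · subst h; exact le_of_eq hval_abs
    · have h2 := hstrict z hz h
      rw [norm_mul, hcastR z hz1.le] at h2
      exact h2.le
  have hsup : zygSup f₀ = 1 := by
    rw [zygSup]
    apply le_antisymm
    · apply Real.sSup_le _ zero_le_one
      rintro x ⟨z, hz, rfl⟩
      exact hle1 z hz
    · apply le_csSup
      · exact ⟨1, by rintro x ⟨z, hz, rfl⟩; exact hle1 z hz⟩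
      · exact ⟨z₀, hz₀, hval_abs⟩
  have hnorm : zygNorm f₀ = 1 := by
    rw [zygNorm, hf00, hdf00, hsup]; simp
  exact ⟨hmem, fun z hz => hD2 z (hb_sub hz), hval, hstrict, hnorm⟩
end
end

section
/- Let z₀ ∈ Δ and let F : Δ → ℂ be continuous with |F(z)| ≤ 1 for all z ∈ Δ and |F(z)| < 1 for all z ∈ Δ with z ≠ z₀. Let μ be a complex regular Borel measure on Δ with total variation ‖μ‖ ≤ 1 and ∫_Δ F dμ = 1. Then |μ|(Δ \ {z₀}) = 0 and μ({z₀})·F(z₀) = 1; in particular μ is a unimodular multiple of the Dirac measure at z₀. -/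
open Complex MeasureTheory

noncomputable section

/-- Let `z₀ ∈ Δ` and `F : Δ → ℂ` continuous with `|F| ≤ 1` on `Δ` and
`|F(z)| < 1` for `z ≠ z₀`. Let `μ` be a complex regular Borel measure on `Δ` with
`‖μ‖ ≤ 1` and `∫ F dμ = 1`. Then `|μ|(Δ \ {z₀}) = 0` and `μ({z₀})·F(z₀) = 1`; in
particular `μ` is a unimodular multiple of the Dirac measure at `z₀`.

The complex measure `μ` is encoded through its polar decomposition: a positive regular
Borel measure `ν = |μ|` together with a Borel density `g` of modulus one, so that
`μ(s) = ∫_s g dν`, `|μ| = ν` and `‖μ‖ = ν(Δ)`. -/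
theorem stmt_7 (z₀ : ↥unitDisc) (F : ↥unitDisc → ℂ) (hFcont : Continuous F)
    (hFle : ∀ z, ‖F z‖ ≤ 1) (hFlt : ∀ z, z ≠ z₀ → ‖F z‖ < 1)
    (ν : Measure ↥unitDisc) [IsFiniteMeasure ν] [ν.Regular]
    (g : ↥unitDisc → ℂ) (hg : Measurable g) (hg1 : ∀ z, ‖g z‖ = 1)
    (hμnorm : ν Set.univ ≤ 1)
    (hint : ∫ z, F z * g z ∂ν = 1) :
    ν ({z₀}ᶜ) = 0 ∧ (∫ z in ({z₀} : Set ↥unitDisc), g z ∂ν) * F z₀ = 1 ∧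
      ∃ c : ℂ, ‖c‖ = 1 ∧ ∀ s : Set ↥unitDisc, MeasurableSet s →
        ∫ z in s, g z ∂ν = c * Set.indicator s (fun _ => (1 : ℂ)) z₀ := by
  have hFmeas : Measurable F := hFcont.measurable
  have hbound : ∀ z, ‖F z * g z‖ ≤ 1 := by
    intro z
    rw [norm_mul, hg1 z, mul_one]
    exact hFle z
  have hInt : Integrable (fun z => F z * g z) ν := by
    refine Integrable.mono' (integrable_const (1:ℝ)) ((hFmeas.mul hg).aestronglyMeasurable) ?_
    exact ae_of_all _ hbound
  have htle : (ν Set.univ).toReal ≤ 1 := by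
    have := ENNReal.toReal_mono (by norm_num) hμnorm
    simpa using this
  have h1le : (1:ℝ) ≤ ∫ z, ‖F z * g z‖ ∂ν := by
    have h := norm_integral_le_integral_norm (μ := ν) (fun z => F z * g z)
    rw [hint] at h
    simpa using h
  have hle1 : ∫ z, ‖F z * g z‖ ∂ν ≤ (ν Set.univ).toReal := by
    calc ∫ z, ‖F z * g z‖ ∂ν ≤ ∫ _z, (1:ℝ) ∂ν :=
          integral_mono_of_nonneg (ae_of_all _ fun z => norm_nonneg _)
            (integrable_const 1) (ae_of_all _ hbound)
      _ = (ν Set.univ).toReal := by simp [Measure.real]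
  have htR : (ν Set.univ).toReal = 1 := le_antisymm htle (le_trans h1le hle1)
  have hnI : ∫ z, ‖F z * g z‖ ∂ν = 1 := le_antisymm (htR ▸ hle1) h1le
  -- a.e. norm one
  have hsub : ∫ z, (1 - ‖F z * g z‖) ∂ν = 0 := by
    rw [integral_sub (integrable_const 1) hInt.norm, hnI]
    simp [Measure.real, htR]
  have haeeq : ∀ᵐ z ∂ν, (1 - ‖F z * g z‖) = 0 := by
    have := (integral_eq_zero_iff_of_nonneg (f := fun z => 1 - ‖F z * g z‖)
      (fun z => by simpa using hbound z)
      ((integrable_const 1).sub hInt.norm)).mp hsub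
    filter_upwards [this] with z hz using hz
  have haez : ∀ᵐ z ∂ν, z = z₀ := by
    filter_upwards [haeeq] with z hz
    by_contra hne
    have h1 : ‖F z * g z‖ = 1 := by linarith
    rw [norm_mul, hg1 z, mul_one] at h1
    exact absurd h1 (ne_of_lt (hFlt z hne))
  have hcompl : ν ({z₀}ᶜ) = 0 := by
    have h := haez
    rw [ae_iff] at h
    have he : ({z₀}ᶜ : Set ↥unitDisc) = {a | ¬ a = z₀} := by ext; simp
    rw [he]; exact h
  have hνuniv : ν Set.univ = 1 := by
    have hne : ν Set.univ ≠ ⊤ := measure_ne_top ν _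
    rw [← ENNReal.ofReal_toReal hne, htR]; norm_num
  have hgae : (fun z => g z) =ᵐ[ν] (fun _ => g z₀) := by
    filter_upwards [haez] with z hz; rw [hz]
  have hFgae : (fun z => F z * g z) =ᵐ[ν] (fun _ => F z₀ * g z₀) := by
    filter_upwards [haez] with z hz; rw [hz]
  have hFg1 : F z₀ * g z₀ = 1 := by
    have := hint
    rw [integral_congr_ae hFgae, integral_const, Measure.real, htR] at this
    simpa using this
  -- measure of measurable sets
  have hνs : ∀ s : Set ↥unitDisc, MeasurableSet s →
      (ν s).toReal = Set.indicator s (fun _ => (1:ℝ)) z₀ := by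
    intro s hs
    by_cases hz : z₀ ∈ s
    · have hsub : sᶜ ⊆ ({z₀}ᶜ : Set ↥unitDisc) :=
        Set.compl_subset_compl.mpr (Set.singleton_subset_iff.mpr hz)
      have hsc : ν sᶜ = 0 := measure_mono_null hsub hcompl
      have : ν s = ν Set.univ := by
        have := measure_add_measure_compl hs (μ := ν)
        rwa [hsc, add_zero] at this
      rw [this, hνuniv, Set.indicator_of_mem hz]; simp
    · have hsub : s ⊆ ({z₀}ᶜ : Set ↥unitDisc) := by
        intro x hx hxz
        rw [Set.mem_singleton_iff] at hxz
        exact hz (hxz ▸ hx)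
      have : ν s = 0 := measure_mono_null hsub hcompl
      rw [this, Set.indicator_of_notMem hz]; simp
  have hset : ∀ s : Set ↥unitDisc, MeasurableSet s →
      ∫ z in s, g z ∂ν = (g z₀) * Set.indicator s (fun _ => (1:ℂ)) z₀ := by
    intro s hs
    rw [integral_congr_ae (ae_restrict_of_ae hgae), setIntegral_const]
    rw [Measure.real, hνs s hs]
    by_cases hz : z₀ ∈ s
    · rw [Set.indicator_of_mem hz, Set.indicator_of_mem hz]; simp
    · rw [Set.indicator_of_notMem hz, Set.indicator_of_notMem hz]; simp
  refine ⟨hcompl, ?_, g z₀, hg1 z₀, hset⟩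
  rw [hset {z₀} (measurableSet_singleton z₀),
    Set.indicator_of_mem (Set.mem_singleton z₀), mul_one, mul_comm]
  exact hFg1
end
end

section
/- Let w, w₁ ∈ Δ and α, α₁ ∈ ℝ be such that (1−|w|²)e^{iα}f''(w) = (1−|w₁|²)e^{iα₁}f''(w₁) for every f ∈ 𝒵₀^{(0,1)}. Then w = w₁ and e^{iα} = e^{iα₁}. -/
open Complex MeasureTheory

noncomputable section

lemma zyg_of_bdd (f : ℂ → ℂ) (C : ℝ)
    (hb : ∀ z : ℂ, ‖z‖ < 1 → ‖deriv (deriv f) z‖ ≤ C) :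
    ZygVanish f := by
  have hC : 0 ≤ C := le_trans (norm_nonneg _) (hb 0 (by simp))
  intro ε hε
  have hpos : 0 < ε / (2*(C+1)) := by positivity
  refine ⟨1 - ε / (2*(C+1)), by linarith, ?_⟩
  intro z hr hz1
  have h1 := hb z hz1
  have h2 : 0 ≤ ‖deriv (deriv f) z‖ := norm_nonneg _
  have h3 : 0 ≤ ‖z‖ := norm_nonneg z
  have key : ε / (2*(C+1)) * (2*(C+1)) = ε := by field_simp
  nlinarith [mul_le_mul_of_nonneg_left h1 (by nlinarith : (0:ℝ) ≤ 1 - ‖z‖ ^ 2),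
    mul_lt_mul_of_pos_right hr (by linarith : (0:ℝ) < C + 1)]

lemma dd_sq : deriv (deriv (fun z : ℂ => z^2)) = fun _ => 2 := by
  have h1 : deriv (fun z : ℂ => z^2) = fun z => 2*z := by
    funext z; simp [deriv_pow]
  rw [h1]; funext z
  rw [deriv_const_mul_field]; simp

lemma dd_cube : deriv (deriv (fun z : ℂ => z^3)) = fun z => 6*z := by
  have h1 : deriv (fun z : ℂ => z^3) = fun z => 3*z^2 := by
    funext z; simp [deriv_pow]
  rw [h1]; funext z
  rw [deriv_const_mul_field]; simp [deriv_pow]; ring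

lemma memZ01_sq : MemZ01 (fun z : ℂ => z^2) := by
  refine ⟨⟨?_, ?_, ?_⟩, by simp, ?_⟩
  · exact (differentiable_pow 2).differentiableOn
  · exact (continuous_pow 2).continuousOn
  · refine zyg_of_bdd _ 2 fun z _ => ?_
    rw [dd_sq]; simp
  · have : deriv (fun z : ℂ => z^2) = fun z => 2*z := by funext z; simp [deriv_pow]
    rw [this]; simp

lemma memZ01_cube : MemZ01 (fun z : ℂ => z^3) := by
  refine ⟨⟨?_, ?_, ?_⟩, by simp, ?_⟩
  · exact (differentiable_pow 3).differentiableOn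
  · exact (continuous_pow 3).continuousOn
  · refine zyg_of_bdd _ 6 fun z hz => ?_
    rw [dd_cube]; simp
    exact hz.le
  · have : deriv (fun z : ℂ => z^3) = fun z => 3*z^2 := by funext z; simp [deriv_pow]
    rw [this]; simp

/-- STATEMENT 8: If `(1-|w|²)e^{iα}f''(w) = (1-|w₁|²)e^{iα₁}f''(w₁)` for every
`f ∈ 𝒵₀^{(0,1)}`, with `w, w₁ ∈ Δ`, then `w = w₁` and `e^{iα} = e^{iα₁}`. -/
theorem stmt_8 (w w₁ : ℂ) (hw : w ∈ unitDisc) (hw₁ : w₁ ∈ unitDisc) (α α₁ : ℝ)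
    (h : ∀ f : ℂ → ℂ, MemZ01 f →
      (1 - (‖w‖ : ℂ) ^ 2) * Complex.exp (Complex.I * α) * deriv (deriv f) w =
        (1 - (‖w₁‖ : ℂ) ^ 2) * Complex.exp (Complex.I * α₁) *
          deriv (deriv f) w₁) :
    w = w₁ ∧ Complex.exp (Complex.I * α) = Complex.exp (Complex.I * α₁) := by
  have habs : ‖w‖ < 1 := by simpa [unitDisc] using hw
  set A : ℂ := (1 - (‖w‖ : ℂ) ^ 2) * Complex.exp (Complex.I * α) with hA
  set A₁ : ℂ := (1 - (‖w₁‖ : ℂ) ^ 2) * Complex.exp (Complex.I * α₁) with hA₁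
  have hsq := h _ memZ01_sq
  rw [dd_sq] at hsq
  have hAA : A = A₁ := by
    have : A * 2 = A₁ * 2 := hsq
    field_simp at this; exact this
  have hAne : A ≠ 0 := by
    apply mul_ne_zero _ (Complex.exp_ne_zero _)
    intro hc
    have : ((‖w‖ : ℝ) ^ 2 : ℂ) = 1 := by
      linear_combination -hc
    have h2 : (‖w‖) ^ 2 = 1 := by exact_mod_cast this
    nlinarith [norm_nonneg w]
  have hcube := h _ memZ01_cube
  rw [dd_cube] at hcube
  have hww : A * (6 * w) = A₁ * (6 * w₁) := hcube
  rw [← hAA] at hww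
  have hw_eq : w = w₁ := by
    have h6 : A * w = A * w₁ := by linear_combination hww / 6
    exact mul_left_cancel₀ hAne h6
  refine ⟨hw_eq, ?_⟩
  have hfac : (1 - (‖w‖ : ℂ) ^ 2) ≠ 0 := by
    intro hc
    have : ((‖w‖ : ℝ) ^ 2 : ℂ) = 1 := by linear_combination -hc
    have h2 : (‖w‖) ^ 2 = 1 := by exact_mod_cast this
    nlinarith [norm_nonneg w]
  rw [hA, hA₁, ← hw_eq] at hAA
  exact mul_left_cancel₀ hfac hAA
end
end

section
/- Let T be a surjective linear isometry of 𝒵₀^{(0,1)}, and suppose σ : Δ → Δ and Γ : Δ → {ζ ∈ ℂ : |ζ| = 1} satisfy (1−|z|²)(Tf)''(z) = Γ(z)·(1−|σ(z)|²)·f''(σ(z)) for all f ∈ 𝒵₀^{(0,1)} and z ∈ Δ. Then, writing f₀(z) = z²/2 and f₁(z) = z³/6, one has (Tf₀)''(z) ≠ 0 for every z ∈ Δ, σ(z) = (Tf₁)''(z)/(Tf₀)''(z) for every z ∈ Δ, and σ is a bijective holomorphic map of Δ onto itself. -/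
open Complex MeasureTheory

noncomputable section

namespace Stmt9

lemma mem_disc_iff {z : ℂ} : z ∈ unitDisc ↔ ‖z‖ < 1 := by
  simp [unitDisc, Metric.mem_ball, Complex.dist_eq]

lemma one_sub_sq_pos {x : ℝ} (h0 : 0 ≤ x) (h1 : x < 1) : 0 < 1 - x ^ 2 := by nlinarith

lemma one_sub_sq_ne {z : ℂ} (hz : ‖z‖ < 1) : (1 : ℂ) - (‖z‖ : ℂ) ^ 2 ≠ 0 := by
  have h := one_sub_sq_pos (norm_nonneg z) hz
  have h2 : ((1 - ‖z‖ ^ 2 : ℝ) : ℂ) ≠ 0 := by exact_mod_cast h.ne'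
  intro hc; apply h2; push_cast; linear_combination hc

lemma abs_one_sub_sq {x : ℝ} (h0 : 0 ≤ x) (h1 : x < 1) :
    ‖1 - (x : ℂ) ^ 2‖ = 1 - x ^ 2 := by
  have : (1 - (x:ℂ)^2) = ((1 - x^2 : ℝ) : ℂ) := by push_cast; ring
  rw [this, Complex.norm_real]
  exact _root_.abs_of_nonneg (one_sub_sq_pos h0 h1).le

lemma one_sub_ne {x : ℂ} (h : ‖x‖ < 1) : (1 : ℂ) - x ≠ 0 := by
  intro hx
  have : x = 1 := by linear_combination -hx
  simp [this] at h

lemma dd_congr {F G : ℂ → ℂ} {s : Set ℂ} (hs : IsOpen s) (h : Set.EqOn F G s)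
    {z : ℂ} (hz : z ∈ s) : deriv (deriv F) z = deriv (deriv G) z :=
  (Filter.eventuallyEq_of_mem (hs.mem_nhds hz) h).deriv.deriv_eq

lemma zygVanish_of_bound (f : ℂ → ℂ) (C : ℝ) (hC : 0 ≤ C)
    (hb : ∀ z : ℂ, ‖z‖ < 1 → ‖deriv (deriv f) z‖ ≤ C) :
    ZygVanish f := by
  intro ε hε
  have hd : 0 < ε / (2 * (C + 1)) := by positivity
  refine ⟨1 - ε / (2 * (C + 1)), by linarith, fun z hr h1 => ?_⟩
  have hz0 := norm_nonneg z
  have hb' := hb z h1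
  have habs := norm_nonneg (deriv (deriv f) z)
  have he : ε / (C + 1) = 2 * (ε / (2 * (C + 1))) := by field_simp
  have h2 : 1 - ‖z‖ ^ 2 < ε / (C + 1) := by
    have hm := mul_lt_mul_of_pos_right (show 1 - ‖z‖ < ε / (2 * (C + 1)) by linarith)
      (show (0:ℝ) < 1 + ‖z‖ by linarith)
    nlinarith [hm]
  have h3 : ε / (C + 1) * (C + 1) = ε := by field_simp
  nlinarith [mul_le_mul_of_nonneg_left hb' (by nlinarith : (0:ℝ) ≤ 1 - ‖z‖ ^ 2)]

lemma deriv_sq_half : deriv (fun w : ℂ => w ^ 2 / 2) = fun w => w := by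
  funext w
  have h := (hasDerivAt_pow 2 w).div_const 2
  simpa using h.deriv

lemma deriv_cube_six : deriv (fun w : ℂ => w ^ 3 / 6) = fun w => w ^ 2 / 2 := by
  funext w
  have h := (hasDerivAt_pow 3 w).div_const 6
  have := h.deriv
  rw [this]; ring

lemma dd_f0 (z : ℂ) : deriv (deriv (fun w : ℂ => w ^ 2 / 2)) z = 1 := by
  rw [deriv_sq_half]; simp

lemma dd_f1 (z : ℂ) : deriv (deriv (fun w : ℂ => w ^ 3 / 6)) z = z := by
  rw [deriv_cube_six, deriv_sq_half]

lemma memZ01_f0 : MemZ01 (fun w : ℂ => w ^ 2 / 2) := by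
  have hd : Differentiable ℂ (fun w : ℂ => w ^ 2 / 2) := (differentiable_pow 2).div_const 2
  refine ⟨⟨hd.differentiableOn, hd.continuous.continuousOn, ?_⟩, by simp, by rw [deriv_sq_half]⟩
  refine zygVanish_of_bound _ 1 zero_le_one ?_
  intro z hz; rw [dd_f0]; simp

lemma memZ01_f1 : MemZ01 (fun w : ℂ => w ^ 3 / 6) := by
  have hd : Differentiable ℂ (fun w : ℂ => w ^ 3 / 6) := (differentiable_pow 3).div_const 6
  refine ⟨⟨hd.differentiableOn, hd.continuous.continuousOn, ?_⟩, by simp, by rw [deriv_cube_six]; simp⟩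
  refine zygVanish_of_bound _ 1 zero_le_one ?_
  intro z hz; rw [dd_f1]; simpa using hz.le

lemma normSq_identity (a w : ℂ) : Complex.normSq (1 - (starRingEnd ℂ) a * w) =
    (1 - Complex.normSq a) * (1 - Complex.normSq w) + Complex.normSq (w - a) := by
  simp [Complex.normSq_apply, Complex.mul_re, Complex.mul_im, Complex.sub_re, Complex.sub_im,
    Complex.one_re, Complex.one_im, Complex.conj_re, Complex.conj_im]
  ring

lemma peak (a : ℂ) (ha : ‖a‖ < 1) :
    ∃ f : ℂ → ℂ, MemZ01 f ∧ ∀ w : ℂ, ‖w‖ < 1 →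
      deriv (deriv f) w = (1 - (‖a‖ : ℂ) ^ 2) / (1 - (starRingEnd ℂ) a * w) ^ 2 := by
  by_cases h0 : a = 0
  · refine ⟨fun w => w ^ 2 / 2, memZ01_f0, fun w hw => ?_⟩
    simp [h0, dd_f0]
  · set c := (starRingEnd ℂ) a with hc
    have hcne : c ≠ 0 := by simpa [hc] using h0
    have hca : ‖c‖ = ‖a‖ := Complex.norm_conj a
    have hcpos : 0 < ‖c‖ := by rw [hca]; exact norm_pos_iff.mpr h0
    have hc1 : ‖c‖ < 1 := by rw [hca]; exact ha
    have hinv : 1 < (‖c‖)⁻¹ := by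
      have := inv_strictAnti₀ hcpos hc1
      simpa using this
    set K : ℂ := -((1 - (‖a‖ : ℂ) ^ 2) / c ^ 2) with hK
    set f : ℂ → ℂ := fun w => K * (c * w + Complex.log (1 - c * w)) with hf
    set g1 : ℂ → ℂ := fun w => (1 - (‖a‖ : ℂ) ^ 2) * (w / (1 - c * w)) with hg1
    set U : Set ℂ := Metric.ball (0:ℂ) ((‖c‖)⁻¹) with hU
    have hUopen : IsOpen U := Metric.isOpen_ball
    have hmemU : ∀ w : ℂ, ‖w‖ ≤ 1 → w ∈ U := by
      intro w hw
      simp only [hU, Metric.mem_ball, Complex.dist_eq, sub_zero]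
      exact lt_of_le_of_lt hw hinv
    have habscw : ∀ w ∈ U, ‖c * w‖ < 1 := by
      intro w hw
      rw [norm_mul]
      have hwlt : ‖w‖ < (‖c‖)⁻¹ := by
        simpa [hU, Complex.dist_eq] using hw
      calc ‖c‖ * ‖w‖ < ‖c‖ * (‖c‖)⁻¹ :=
            mul_lt_mul_of_pos_left hwlt hcpos
        _ = 1 := mul_inv_cancel₀ hcpos.ne'
    have hne : ∀ w ∈ U, (1 : ℂ) - c * w ≠ 0 := fun w hw => one_sub_ne (habscw w hw)
    have hslit : ∀ w ∈ U, (1 - c * w) ∈ Complex.slitPlane := by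
      intro w hw
      have hre : (c * w).re ≤ ‖c * w‖ := Complex.re_le_norm _
      have h1 := habscw w hw
      refine Complex.mem_slitPlane_iff.mpr (Or.inl ?_)
      simp only [Complex.sub_re, Complex.one_re]
      linarith
    have hder1 : ∀ w ∈ U, HasDerivAt f (g1 w) w := by
      intro w hw
      have h1 : HasDerivAt (fun w : ℂ => c * w) c w := by
        simpa using (hasDerivAt_id w).const_mul c
      have h2 : HasDerivAt (fun w : ℂ => 1 - c * w) (-c) w := h1.const_sub 1
      have hlog : HasDerivAt (fun w : ℂ => Complex.log (1 - c * w)) ((1 - c * w)⁻¹ * -c) w :=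
        by have := (Complex.hasDerivAt_log (hslit w hw)).comp w h2; exact this
      have hsum : HasDerivAt (fun w : ℂ => c * w + Complex.log (1 - c * w))
          (c + (1 - c * w)⁻¹ * -c) w := h1.add hlog
      have hfd := hsum.const_mul K
      refine hfd.congr_deriv ?_
      rw [hg1, hK]
      field_simp [hne w hw]
      ring
    have hder2 : ∀ w ∈ U, HasDerivAt g1
        ((1 - (‖a‖ : ℂ) ^ 2) / (1 - c * w) ^ 2) w := by
      intro w hw
      have h2 : HasDerivAt (fun w : ℂ => 1 - c * w) (-c) w :=
        (by simpa using (hasDerivAt_id w).const_mul c : HasDerivAt (fun w : ℂ => c * w) c w).const_sub 1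
      have hdiv := (hasDerivAt_id w).div h2 (hne w hw)
      have hmul := hdiv.const_mul (1 - (‖a‖ : ℂ) ^ 2)
      refine hmul.congr_deriv ?_
      simp only [id]
      field_simp [hne w hw]
      ring
    have hderivf : ∀ w ∈ U, deriv f w = g1 w := fun w hw => (hder1 w hw).deriv
    have hdd : ∀ w ∈ U, deriv (deriv f) w = (1 - (‖a‖ : ℂ) ^ 2) / (1 - c * w) ^ 2 := by
      intro w hw
      have hev : deriv f =ᶠ[nhds w] g1 := Filter.eventuallyEq_of_mem (hUopen.mem_nhds hw) hderivf
      rw [hev.deriv_eq]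
      exact (hder2 w hw).deriv
    have habsnum : ‖1 - (‖a‖ : ℂ) ^ 2‖ = 1 - ‖a‖ ^ 2 :=
      abs_one_sub_sq (norm_nonneg a) ha
    refine ⟨f, ⟨⟨?_, ?_, ?_⟩, ?_, ?_⟩, fun w hw => hdd w (hmemU w hw.le)⟩
    · intro w hw
      exact ((hder1 w (hmemU w (mem_disc_iff.mp hw).le)).differentiableAt).differentiableWithinAt
    · intro w hw
      have hw1 : ‖w‖ ≤ 1 := by
        simpa [Complex.dist_eq] using Metric.mem_closedBall.mp hw
      exact ((hder1 w (hmemU w hw1)).differentiableAt).continuousAt.continuousWithinAt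
    · refine zygVanish_of_bound f ((1 - ‖a‖ ^ 2) / (1 - ‖a‖) ^ 2)
        (div_nonneg (by nlinarith [norm_nonneg a]) (by positivity)) ?_
      intro z hz
      have hzU := hmemU z hz.le
      rw [hdd z hzU, norm_div, norm_pow, habsnum]
      have hlow : 1 - ‖a‖ ≤ ‖1 - c * z‖ := by
        have h1 := norm_sub_norm_le (1:ℂ) (c * z)
        have h2 : ‖c * z‖ ≤ ‖a‖ := by
          rw [norm_mul, hca]
          nlinarith [norm_nonneg a, norm_nonneg z, hz.le]
        simp only [norm_one] at h1
        linarith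
      have hnum : 0 ≤ 1 - ‖a‖ ^ 2 := by nlinarith [norm_nonneg a]
      gcongr
    · simp [hf]
    · have h := hderivf 0 (hmemU 0 (by simp))
      rw [h, hg1]; simp

lemma normSq_pos_one_sub {a w : ℂ} (ha : ‖a‖ < 1) (hw : ‖w‖ < 1) :
    0 < Complex.normSq (1 - (starRingEnd ℂ) a * w) := by
  refine Complex.normSq_pos.mpr (one_sub_ne ?_)
  rw [norm_mul, Complex.norm_conj]
  nlinarith [norm_nonneg a, norm_nonneg w]

lemma peak_val (a w : ℂ) (ha : ‖a‖ < 1) :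
    ‖(1 - (‖a‖ : ℂ) ^ 2) / (1 - (starRingEnd ℂ) a * w) ^ 2‖
      = (1 - ‖a‖ ^ 2) / Complex.normSq (1 - (starRingEnd ℂ) a * w) := by
  rw [norm_div, norm_pow, abs_one_sub_sq (norm_nonneg a) ha, Complex.sq_norm (1 - (starRingEnd ℂ) a * w)]

lemma peak_le_one (a w : ℂ) (ha : ‖a‖ < 1) (hw : ‖w‖ < 1) :
    (1 - ‖w‖ ^ 2) *
      ‖(1 - (‖a‖ : ℂ) ^ 2) / (1 - (starRingEnd ℂ) a * w) ^ 2‖ ≤ 1 := by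
  rw [peak_val a w ha, mul_div_assoc']
  rw [div_le_one (normSq_pos_one_sub ha hw)]
  have hid := normSq_identity a w
  rw [← Complex.sq_norm w, ← Complex.sq_norm a] at hid
  nlinarith [Complex.normSq_nonneg (w - a)]

lemma peak_eq_one (a w : ℂ) (ha : ‖a‖ < 1) (hw : ‖w‖ < 1)
    (h : (1 - ‖w‖ ^ 2) *
      ‖(1 - (‖a‖ : ℂ) ^ 2) / (1 - (starRingEnd ℂ) a * w) ^ 2‖ = 1) :
    w = a := by
  rw [peak_val a w ha, mul_div_assoc', div_eq_one_iff_eq (normSq_pos_one_sub ha hw).ne'] at h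
  have hid := normSq_identity a w
  rw [← Complex.sq_norm w, ← Complex.sq_norm a] at hid
  have hz : Complex.normSq (w - a) = 0 := by nlinarith
  have := Complex.normSq_eq_zero.mp hz
  linear_combination this

lemma peak_at (a : ℂ) (ha : ‖a‖ < 1) :
    (1 - ‖a‖ ^ 2) *
      ‖(1 - (‖a‖ : ℂ) ^ 2) / (1 - (starRingEnd ℂ) a * a) ^ 2‖ = 1 := by
  rw [peak_val a a ha]
  have h1 : (1 : ℂ) - (starRingEnd ℂ) a * a = ((1 - Complex.normSq a : ℝ) : ℂ) := by
    rw [mul_comm, Complex.mul_conj]; push_cast; ring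
  rw [h1, Complex.normSq_ofReal]
  have h2 : Complex.normSq a = ‖a‖ ^ 2 := (Complex.sq_norm a).symm
  rw [h2]
  have h3 : 0 < 1 - ‖a‖ ^ 2 := one_sub_sq_pos (norm_nonneg a) ha
  field_simp

end Stmt9

open Stmt9

/-- STATEMENT 9: Let `T` be a surjective linear isometry of `𝒵₀^{(0,1)}` and suppose
`σ : Δ → Δ` and a unimodular `Γ : Δ → 𝕊¹` satisfy
`(1-|z|²)(Tf)''(z) = Γ(z)(1-|σ(z)|²)f''(σ(z))` for all `f ∈ 𝒵₀^{(0,1)}`, `z ∈ Δ`. Then,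
with `f₀(z) = z²/2` and `f₁(z) = z³/6`, `(Tf₀)''(z) ≠ 0` on `Δ`,
`σ(z) = (Tf₁)''(z)/(Tf₀)''(z)` on `Δ`, and `σ` is a bijective holomorphic map of `Δ`
onto itself. -/
theorem stmt_9 (T : (ℂ → ℂ) → (ℂ → ℂ))
    (hmap : ∀ f, MemZ01 f → MemZ01 (T f))
    (hadd : ∀ f g, MemZ01 f → MemZ01 g → ∀ z ∈ unitDisc, T (f + g) z = T f z + T g z)
    (hsmul : ∀ (c : ℂ) (f), MemZ01 f → ∀ z ∈ unitDisc, T (c • f) z = c * T f z)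
    (hsurj : ∀ g, MemZ01 g → ∃ f, MemZ01 f ∧ ∀ z ∈ unitDisc, T f z = g z)
    (hiso : ∀ f, MemZ01 f → zygSup (T f) = zygSup f)
    (σ : ℂ → ℂ) (hσmap : ∀ z ∈ unitDisc, σ z ∈ unitDisc)
    (Γ : ℂ → ℂ) (hΓ : ∀ z ∈ unitDisc, ‖Γ z‖ = 1)
    (heq : ∀ f, MemZ01 f → ∀ z ∈ unitDisc,
      (1 - (‖z‖ : ℂ) ^ 2) * deriv (deriv (T f)) z =
        Γ z * ((1 - (‖σ z‖ : ℂ) ^ 2) * deriv (deriv f) (σ z))) :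
    (∀ z ∈ unitDisc, deriv (deriv (T fun w => w ^ 2 / 2)) z ≠ 0) ∧
    (∀ z ∈ unitDisc, σ z =
      deriv (deriv (T fun w => w ^ 3 / 6)) z / deriv (deriv (T fun w => w ^ 2 / 2)) z) ∧
    DifferentiableOn ℂ σ unitDisc ∧ Set.BijOn σ unitDisc unitDisc := by
  have hOpen : IsOpen unitDisc := Metric.isOpen_ball
  have hΓne : ∀ z ∈ unitDisc, Γ z ≠ 0 := by
    intro z hz h
    have := hΓ z hz
    rw [h] at this
    simp at this
  -- Parts 1 and 2
  have key : ∀ z ∈ unitDisc, deriv (deriv (T fun w => w ^ 2 / 2)) z ≠ 0 ∧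
      σ z = deriv (deriv (T fun w => w ^ 3 / 6)) z / deriv (deriv (T fun w => w ^ 2 / 2)) z := by
    intro z hz
    have hz1 : ‖z‖ < 1 := mem_disc_iff.mp hz
    have hσz : ‖σ z‖ < 1 := mem_disc_iff.mp (hσmap z hz)
    have e0 := heq _ memZ01_f0 z hz
    rw [dd_f0] at e0
    have e1 := heq _ memZ01_f1 z hz
    rw [dd_f1] at e1
    have hzne : (1 : ℂ) - (‖z‖ : ℂ) ^ 2 ≠ 0 := one_sub_sq_ne hz1
    have hσne : (1 : ℂ) - (‖σ z‖ : ℂ) ^ 2 ≠ 0 := one_sub_sq_ne hσz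
    have hrhs : Γ z * ((1 - (‖σ z‖ : ℂ) ^ 2) * 1) ≠ 0 := by
      refine mul_ne_zero (hΓne z hz) ?_
      simpa using hσne
    have hne0 : deriv (deriv (T fun w => w ^ 2 / 2)) z ≠ 0 := by
      intro h
      rw [h, mul_zero] at e0
      exact hrhs e0.symm
    refine ⟨hne0, ?_⟩
    have h2 : (1 - (‖z‖ : ℂ) ^ 2) * deriv (deriv (T fun w => w ^ 3 / 6)) z =
        (1 - (‖z‖ : ℂ) ^ 2) * (σ z * deriv (deriv (T fun w => w ^ 2 / 2)) z) := by
      linear_combination e1 - σ z * e0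
    have h3 := mul_left_cancel₀ hzne h2
    rw [h3]
    field_simp
  refine ⟨fun z hz => (key z hz).1, fun z hz => (key z hz).2, ?_, ?_, ?_, ?_⟩
  · -- DifferentiableOn σ
    have hA1 := (((hmap _ memZ01_f1).1.1.analyticOnNhd hOpen).deriv).deriv
    have hA0 := (((hmap _ memZ01_f0).1.1.analyticOnNhd hOpen).deriv).deriv
    have hq : DifferentiableOn ℂ
        (fun z => deriv (deriv (T fun w => w ^ 3 / 6)) z / deriv (deriv (T fun w => w ^ 2 / 2)) z)
        unitDisc := hA1.differentiableOn.div hA0.differentiableOn (fun z hz => (key z hz).1)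
    exact hq.congr fun z hz => (key z hz).2
  · -- MapsTo
    exact fun z hz => hσmap z hz
  · -- InjOn
    intro z₁ hz₁ z₂ hz₂ hss
    obtain ⟨F₀, hF₀, hTF₀⟩ := hsurj _ memZ01_f0
    obtain ⟨F₁, hF₁, hTF₁⟩ := hsurj _ memZ01_f1
    have k₀ : ∀ z ∈ unitDisc, (1 - (‖z‖ : ℂ) ^ 2) =
        Γ z * ((1 - (‖σ z‖ : ℂ) ^ 2) * deriv (deriv F₀) (σ z)) := by
      intro z hz
      have e := heq F₀ hF₀ z hz
      rwa [dd_congr hOpen hTF₀ hz, dd_f0, mul_one] at e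
    have k₁ : ∀ z ∈ unitDisc, (1 - (‖z‖ : ℂ) ^ 2) * z =
        Γ z * ((1 - (‖σ z‖ : ℂ) ^ 2) * deriv (deriv F₁) (σ z)) := by
      intro z hz
      have e := heq F₁ hF₁ z hz
      rwa [dd_congr hOpen hTF₁ hz, dd_f1] at e
    set A := (1 - (‖σ z₁‖ : ℂ) ^ 2) * deriv (deriv F₀) (σ z₁) with hA
    set B := (1 - (‖σ z₁‖ : ℂ) ^ 2) * deriv (deriv F₁) (σ z₁) with hB
    have e01 : (1 - (‖z₁‖ : ℂ) ^ 2) = Γ z₁ * A := k₀ z₁ hz₁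
    have e02 : (1 - (‖z₂‖ : ℂ) ^ 2) = Γ z₂ * A := by
      have := k₀ z₂ hz₂; rwa [← hss] at this
    have e11 : (1 - (‖z₁‖ : ℂ) ^ 2) * z₁ = Γ z₁ * B := k₁ z₁ hz₁
    have e12 : (1 - (‖z₂‖ : ℂ) ^ 2) * z₂ = Γ z₂ * B := by
      have := k₁ z₂ hz₂; rwa [← hss] at this
    have hAne : A ≠ 0 := by
      intro h
      rw [h, mul_zero] at e01
      exact one_sub_sq_ne (mem_disc_iff.mp hz₁) e01
    have hq₁ : z₁ * A = B := by
      have h : Γ z₁ * (z₁ * A) = Γ z₁ * B := by linear_combination e11 - z₁ * e01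
      exact mul_left_cancel₀ (hΓne z₁ hz₁) h
    have hq₂ : z₂ * A = B := by
      have h : Γ z₂ * (z₂ * A) = Γ z₂ * B := by linear_combination e12 - z₂ * e02
      exact mul_left_cancel₀ (hΓne z₂ hz₂) h
    exact mul_right_cancel₀ hAne (hq₁.trans hq₂.symm)
  · -- SurjOn
    intro w₀ hw₀
    have hw₀1 : ‖w₀‖ < 1 := mem_disc_iff.mp hw₀
    obtain ⟨f, hfmem, hfdd⟩ := peak w₀ hw₀1
    have hval : ∀ w ∈ unitDisc,
        (1 - ‖w‖ ^ 2) * ‖deriv (deriv f) w‖ ≤ 1 := by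
      intro w hw
      rw [hfdd w (mem_disc_iff.mp hw)]
      exact peak_le_one w₀ w hw₀1 (mem_disc_iff.mp hw)
    have hval_eq : ∀ w ∈ unitDisc,
        (1 - ‖w‖ ^ 2) * ‖deriv (deriv f) w‖ = 1 → w = w₀ := by
      intro w hw h
      rw [hfdd w (mem_disc_iff.mp hw)] at h
      exact peak_eq_one w₀ w hw₀1 (mem_disc_iff.mp hw) h
    have hone : (1 - ‖w₀‖ ^ 2) * ‖deriv (deriv f) w₀‖ = 1 := by
      rw [hfdd w₀ hw₀1]
      exact peak_at w₀ hw₀1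
    have hDne : unitDisc.Nonempty := ⟨0, Metric.mem_ball_self one_pos⟩
    have hsupf : zygSup f = 1 := by
      refine le_antisymm (csSup_le (hDne.image _) ?_) (le_csSup ⟨1, ?_⟩ ⟨w₀, hw₀, hone⟩)
      · rintro x ⟨w, hw, rfl⟩
        exact hval w hw
      · rintro x ⟨w, hw, rfl⟩
        exact hval w hw
    have hTsup : zygSup (T f) = 1 := by rw [hiso f hfmem, hsupf]
    have hTf := hmap f hfmem
    obtain ⟨r, hr1, hr⟩ := hTf.1.2.2 (1/2) (by norm_num)
    set r' := max r 0 with hr'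
    have hr'1 : r' < 1 := max_lt hr1 one_pos
    have hr'0 : 0 ≤ r' := le_max_right r 0
    have hKsub : Metric.closedBall (0:ℂ) r' ⊆ unitDisc := Metric.closedBall_subset_ball hr'1
    have han : AnalyticOnNhd ℂ (T f) unitDisc := hTf.1.1.analyticOnNhd hOpen
    have hcont : ContinuousOn
        (fun z => (1 - ‖z‖ ^ 2) * ‖deriv (deriv (T f)) z‖)
        (Metric.closedBall (0:ℂ) r') := by
      refine ContinuousOn.mul ?_ ?_
      · exact (continuous_const.sub (continuous_norm.pow 2)).continuousOn
      · exact continuous_norm.comp_continuousOn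
          ((han.deriv.deriv.continuousOn).mono hKsub)
    have h0K : (0:ℂ) ∈ Metric.closedBall (0:ℂ) r' := Metric.mem_closedBall_self hr'0
    obtain ⟨z₁, hz₁K, hmax⟩ := (isCompact_closedBall (0:ℂ) r').exists_isMaxOn ⟨0, h0K⟩ hcont
    have hz₁D : z₁ ∈ unitDisc := hKsub hz₁K
    have habs_heq : ∀ z ∈ unitDisc,
        (1 - ‖z‖ ^ 2) * ‖deriv (deriv (T f)) z‖
          = (1 - ‖σ z‖ ^ 2) * ‖deriv (deriv f) (σ z)‖ := by
      intro z hz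
      have e := congrArg norm (heq f hfmem z hz)
      rw [norm_mul, norm_mul, norm_mul, hΓ z hz, one_mul,
        abs_one_sub_sq (norm_nonneg z) (mem_disc_iff.mp hz),
        abs_one_sub_sq (norm_nonneg (σ z)) (mem_disc_iff.mp (hσmap z hz))] at e
      exact e
    have hh_le : ∀ z ∈ unitDisc,
        (1 - ‖z‖ ^ 2) * ‖deriv (deriv (T f)) z‖ ≤ 1 := by
      intro z hz
      rw [habs_heq z hz]
      exact hval (σ z) (hσmap z hz)
    have hub : ∀ x ∈ (fun z => (1 - ‖z‖ ^ 2) *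
        ‖deriv (deriv (T f)) z‖) '' unitDisc,
        x ≤ max ((1 - ‖z₁‖ ^ 2) * ‖deriv (deriv (T f)) z₁‖) (1/2) := by
      rintro x ⟨z, hz, rfl⟩
      by_cases hc : ‖z‖ ≤ r'
      · refine le_trans (hmax ?_) (le_max_left _ _)
        simpa [Metric.mem_closedBall, Complex.dist_eq] using hc
      · refine le_trans (hr z (lt_of_le_of_lt (le_max_left r 0) (not_le.mp hc))
          (mem_disc_iff.mp hz)).le (le_max_right _ _)
    have hsup_le : (1:ℝ) ≤ max ((1 - ‖z₁‖ ^ 2) *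
        ‖deriv (deriv (T f)) z₁‖) (1/2) := by
      have h := csSup_le (hDne.image
        (fun z => (1 - ‖z‖ ^ 2) * ‖deriv (deriv (T f)) z‖)) hub
      rw [show sSup ((fun z => (1 - ‖z‖ ^ 2) *
        ‖deriv (deriv (T f)) z‖) '' unitDisc) = zygSup (T f) from rfl, hTsup] at h
      exact h
    have hz₁ge : (1:ℝ) ≤ (1 - ‖z₁‖ ^ 2) * ‖deriv (deriv (T f)) z₁‖ := by
      rcases le_max_iff.mp hsup_le with h | h
      · exact h
      · norm_num at h
    have hz₁eq : (1 - ‖z₁‖ ^ 2) * ‖deriv (deriv (T f)) z₁‖ = 1 :=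
      le_antisymm (hh_le z₁ hz₁D) hz₁ge
    refine ⟨z₁, hz₁D, ?_⟩
    refine hval_eq (σ z₁) (hσmap z₁ hz₁D) ?_
    rw [← habs_heq z₁ hz₁D]
    exact hz₁eq
end
end

section
/- Let α₀ ∈ ℝ and let σ₀ be a disc automorphism such that e^{iα₀} ∫₀^z [f'(σ₀(ξ)) − f'(σ₀(0))] dξ = f(z) for every f ∈ 𝒵₀^{(0,1)} and every z ∈ Δ. Then e^{iα₀} = 1 and σ₀(z) = z for all z ∈ Δ. -/
open Complex MeasureTheory

noncomputable section

/- ---------- auxiliary lemmas ---------- -/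

lemma mem_unitDisc_iff (z : ℂ) : z ∈ unitDisc ↔ ‖z‖ < 1 := by
  simp [unitDisc, Metric.mem_ball, Complex.dist_eq]

lemma memZ01_helper (F : ℂ → ℂ) (R : ℝ) (hR : 1 < R)
    (hF : DifferentiableOn ℂ F (Metric.ball 0 R))
    (h0 : F 0 = 0) (h0' : deriv F 0 = 0) : MemZ01 F := by
  have hopen : IsOpen (Metric.ball (0:ℂ) R) := Metric.isOpen_ball
  have hsub : unitDisc ⊆ Metric.ball (0:ℂ) R := Metric.ball_subset_ball hR.le
  have hsub2 : Metric.closedBall (0:ℂ) 1 ⊆ Metric.ball (0:ℂ) R :=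
    Metric.closedBall_subset_ball hR
  have hA : AnalyticOnNhd ℂ F (Metric.ball 0 R) := hF.analyticOnNhd hopen
  have hA'' : AnalyticOnNhd ℂ (deriv (deriv F)) (Metric.ball 0 R) := hA.deriv.deriv
  have hcont : ContinuousOn (deriv (deriv F)) (Metric.closedBall 0 1) :=
    (hA''.continuousOn).mono hsub2
  obtain ⟨C, hC⟩ := (isCompact_closedBall (0:ℂ) 1).exists_bound_of_continuousOn hcont
  refine ⟨⟨hF.mono hsub, hF.continuousOn.mono hsub2, ?_⟩, h0, h0'⟩
  intro ε hε
  have hC0 : 0 ≤ C := le_trans (norm_nonneg _) (hC 0 (by simp))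
  refine ⟨max 0 (1 - ε / (2 * (C + 1))), ?_, ?_⟩
  · have : 0 < ε / (2 * (C + 1)) := by positivity
    rcases le_or_gt (1 - ε / (2 * (C + 1))) 0 with h | h
    · simp [max_eq_left h]
    · rw [max_eq_right h.le]; linarith
  · intro z hz1 hz2
    have hzb : z ∈ Metric.closedBall (0:ℂ) 1 := by
      simp only [Metric.mem_closedBall, Complex.dist_eq, sub_zero]
      exact hz2.le
    have hb := hC z hzb
    have h2 : 1 - ε / (2 * (C + 1)) < ‖z‖ :=
      lt_of_le_of_lt (le_max_right _ _) hz1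
    have h3 : (0:ℝ) ≤ ‖z‖ := norm_nonneg z
    have h4 : (0:ℝ) ≤ ‖deriv (deriv F) z‖ := norm_nonneg _
    have hpos : (0:ℝ) < C + 1 := by linarith
    have h5 : (1 - ‖z‖) * (2*(C+1)) < ε := by
      rw [← lt_div_iff₀ (by positivity)]; linarith
    have key : (1 - ‖z‖ ^ 2) < ε / (C+1) := by
      rw [lt_div_iff₀ hpos]; nlinarith
    calc (1 - ‖z‖ ^ 2) * ‖deriv (deriv F) z‖
        ≤ (1 - ‖z‖ ^ 2) * C :=
          mul_le_mul_of_nonneg_left hb (by nlinarith)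
      _ ≤ (ε/(C+1)) * C := mul_le_mul_of_nonneg_right key.le hC0
      _ < ε := by rw [div_mul_eq_mul_div, div_lt_iff₀ hpos]; nlinarith

lemma abs_mobius_lt (lam a z : ℂ) (hlam : ‖lam‖ = 1) (ha : ‖a‖ < 1)
    (hz : ‖z‖ < 1) :
    ‖lam * (z - a) / (1 - (starRingEnd ℂ) a * z)‖ < 1 := by
  have hns : Complex.normSq (1 - (starRingEnd ℂ) a * z) - Complex.normSq (z - a)
      = (1 - Complex.normSq a) * (1 - Complex.normSq z) := by
    simp [Complex.normSq_apply, Complex.sub_re, Complex.sub_im, Complex.mul_re, Complex.mul_im,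
      Complex.conj_re, Complex.conj_im, Complex.one_re, Complex.one_im]
    ring
  have hna : Complex.normSq a < 1 := by
    rw [← Complex.sq_norm]; nlinarith [norm_nonneg a]
  have hnz : Complex.normSq z < 1 := by
    rw [← Complex.sq_norm]; nlinarith [norm_nonneg z]
  have hlt : Complex.normSq (z - a) < Complex.normSq (1 - (starRingEnd ℂ) a * z) := by
    nlinarith
  have habs : ‖z - a‖ < ‖1 - (starRingEnd ℂ) a * z‖ := by
    rw [← Complex.sq_norm, ← Complex.sq_norm] at hlt
    exact lt_of_pow_lt_pow_left₀ 2 (norm_nonneg _) hlt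
  have hdpos : 0 < ‖1 - (starRingEnd ℂ) a * z‖ :=
    lt_of_le_of_lt (norm_nonneg _) habs
  rw [norm_div, norm_mul, hlam, one_mul, div_lt_one hdpos]
  exact habs

lemma seg_pow (n : ℕ) (z : ℂ) :
    segIntegral (fun ξ => ξ ^ n) z = z ^ (n + 1) / (n + 1) := by
  unfold segIntegral
  have h1 : ∀ t : ℝ, ((t:ℂ) * z) ^ n = ((t ^ n : ℝ) : ℂ) * z ^ n := by
    intro t; push_cast; ring
  rw [intervalIntegral.integral_congr (fun t _ => h1 t)]
  rw [intervalIntegral.integral_mul_const, intervalIntegral.integral_ofReal, integral_pow]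
  push_cast; ring

lemma machine (α₀ : ℝ) (σ₀ : ℂ → ℂ)
    (h : ∀ f : ℂ → ℂ, MemZ01 f → ∀ z ∈ unitDisc,
      Complex.exp (Complex.I * α₀) *
        segIntegral (fun ξ => deriv f (σ₀ ξ) - deriv f (σ₀ 0)) z = f z)
    (F : ℂ → ℂ) (n : ℕ) (hF : MemZ01 F)
    (hFd : ∀ ξ ∈ unitDisc, deriv F (σ₀ ξ) - deriv F (σ₀ 0) = ξ ^ n) :
    ∀ z ∈ unitDisc, Complex.exp (Complex.I * α₀) * (z ^ (n+1) / (n+1)) = F z := by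
  intro z hz
  have hz' : ‖z‖ < 1 := (mem_unitDisc_iff z).1 hz
  have hseg : segIntegral (fun ξ => deriv F (σ₀ ξ) - deriv F (σ₀ 0)) z
      = segIntegral (fun ξ => ξ ^ n) z := by
    unfold segIntegral
    congr 1
    apply intervalIntegral.integral_congr
    intro t ht
    rw [Set.uIcc_of_le (by norm_num : (0:ℝ) ≤ 1)] at ht
    have h1 : ‖(t:ℂ) * z‖ < 1 := by
      rw [norm_mul, Complex.norm_real, Real.norm_of_nonneg ht.1]
      nlinarith [ht.2, norm_nonneg z, ht.1]
    exact hFd _ ((mem_unitDisc_iff _).2 h1)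
  rw [← seg_pow n z, ← hseg]
  exact h F hF z hz

lemma hasDeriv_logprim (K c : ℂ) (hc : c ≠ 0) (w : ℂ)
    (hw : ‖c‖ * ‖w‖ < 1) :
    HasDerivAt (fun z => (K / c ^ 2) * (c * z - Complex.log (1 + c * z)))
      (K * w / (1 + c * w)) w := by
  have hre : 0 < (1 + c * w).re := by
    have h1 : |(c * w).re| ≤ ‖c * w‖ := Complex.abs_re_le_norm _
    rw [norm_mul] at h1
    have h1' : -(‖c‖ * ‖w‖) ≤ (c * w).re := by
      cases' abs_le.mp h1 with hl hr
      linarith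
    have h2 : (1 + c * w).re = 1 + (c * w).re := by simp
    rw [h2]; linarith
  have hden : (1 + c * w) ≠ 0 := by
    intro hh; rw [hh] at hre; simp at hre
  have h1 : HasDerivAt (fun z : ℂ => 1 + c * z) c w := by
    simpa using ((hasDerivAt_id w).const_mul c).const_add 1
  have hlog : HasDerivAt (fun z => Complex.log (1 + c * z)) (c / (1 + c * w)) w :=
    h1.clog (Complex.mem_slitPlane_iff.mpr (Or.inl hre))
  have h2 : HasDerivAt (fun z : ℂ => c * z - Complex.log (1 + c * z)) (c - c / (1 + c * w)) w :=
    ((by simpa using (hasDerivAt_id w).const_mul c : HasDerivAt (fun z : ℂ => c * z) c w)).sub hlog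
  have h3 := h2.const_mul (K / c ^ 2)
  refine h3.congr_deriv ?_
  field_simp
  ring

/-- STATEMENT 12 -/
theorem stmt_12 (α₀ : ℝ) (σ₀ : ℂ → ℂ) (hσ₀ : IsDiscAut σ₀)
    (h : ∀ f : ℂ → ℂ, MemZ01 f → ∀ z ∈ unitDisc,
      Complex.exp (Complex.I * α₀) *
        segIntegral (fun ξ => deriv f (σ₀ ξ) - deriv f (σ₀ 0)) z = f z) :
    Complex.exp (Complex.I * α₀) = 1 ∧ ∀ z ∈ unitDisc, σ₀ z = z := by
  obtain ⟨lam, a, hlam, ha, hform⟩ := hσ₀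
  set eexp := Complex.exp (Complex.I * α₀) with heexp_def
  have heexp : eexp ≠ 0 := Complex.exp_ne_zero _
  set lc := (starRingEnd ℂ) lam with hlc_def
  set ac := (starRingEnd ℂ) a with hac_def
  have hll : lam * lc = 1 := by
    rw [hlc_def, Complex.mul_conj, Complex.normSq_eq_norm_sq, hlam]; norm_num
  have hlamne : lam ≠ 0 := by
    intro hh; rw [hh] at hlam; simp at hlam
  have h0mem : (0:ℂ) ∈ unitDisc := (mem_unitDisc_iff 0).2 (by simp)
  have hhalfmem : ((1:ℂ)/2) ∈ unitDisc := (mem_unitDisc_iff _).2 (by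
    rw [norm_div]; simp; norm_num)
  have hmhalfmem : (-(1:ℂ)/2) ∈ unitDisc := (mem_unitDisc_iff _).2 (by
    rw [norm_div]; simp; norm_num)
  have hσ0 : σ₀ 0 = -(lam * a) := by
    rw [hform 0 h0mem]; simp
  -- Step 1 : a = 0
  have haz : a = 0 := by
    by_contra ha0
    set c := lc * ac with hc_def
    have hacne : ac ≠ 0 := by simpa [hac_def] using ha0
    have hlcne : lc ≠ 0 := by
      intro hh
      rw [hh, mul_zero] at hll
      exact one_ne_zero hll.symm
    have hc0 : c ≠ 0 := mul_ne_zero hlcne hacne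
    have hcabs : ‖c‖ = ‖a‖ := by
      rw [hc_def, norm_mul, hlc_def, hac_def, Complex.norm_conj, Complex.norm_conj, hlam, one_mul]
    have hca : ‖c‖ < 1 := by rw [hcabs]; exact ha
    set K := lc * (1 - a * ac) with hK_def
    set F := fun z : ℂ => (K / c ^ 2) * (c * z - Complex.log (1 + c * z)) with hF_def
    have hd : ∀ w : ℂ, ‖w‖ < 1 → HasDerivAt F (K * w / (1 + c * w)) w := by
      intro w hw
      apply hasDeriv_logprim K c hc0
      nlinarith [norm_nonneg c, norm_nonneg w]
    have hF0 : F 0 = 0 := by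
      simp [hF_def, Complex.log_one]
    have hF0' : deriv F 0 = 0 := by
      rw [(hd 0 (by simp)).deriv]; simp
    -- need differentiability on a ball of radius > 1 : use R between 1 and 1/|a|
    have hane : ‖a‖ ≠ 0 := by simpa using ha0
    have hapos : 0 < ‖a‖ := lt_of_le_of_ne (norm_nonneg a) (Ne.symm hane)
    set R := (1 + (‖a‖)⁻¹) / 2 with hR_def
    have hainv : 1 < (‖a‖)⁻¹ := (one_lt_inv₀ hapos).2 ha
    have hR1 : 1 < R := by rw [hR_def]; linarith
    have hdR : ∀ w : ℂ, ‖w‖ < R → HasDerivAt F (K * w / (1 + c * w)) w := by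
      intro w hw
      apply hasDeriv_logprim K c hc0
      rw [hcabs]
      calc ‖a‖ * ‖w‖ ≤ ‖a‖ * R :=
            mul_le_mul_of_nonneg_left hw.le (norm_nonneg a)
        _ < 1 := by
            rw [hR_def]
            have : ‖a‖ * ((1 + (‖a‖)⁻¹) / 2)
                = (‖a‖ + 1) / 2 := by
              field_simp
            rw [this]; linarith
    have hmem : MemZ01 F := by
      apply memZ01_helper F R hR1
      · intro w hw
        have hw' : ‖w‖ < R := by
          simpa [Complex.dist_eq] using hw
        exact ((hdR w hw').differentiableAt).differentiableWithinAt
      · exact hF0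
      · exact hF0'
    have hFd1 : ∀ ξ ∈ unitDisc, deriv F (σ₀ ξ) - deriv F (σ₀ 0) = ξ ^ 1 := by
      intro ξ hξ
      have hξa : ‖ξ‖ < 1 := (mem_unitDisc_iff ξ).1 hξ
      have hd1 : (1 : ℂ) - ac * ξ ≠ 0 := by
        intro hh
        have : ac * ξ = 1 := by linear_combination -hh
        have habs1 : ‖ac * ξ‖ = 1 := by rw [this]; simp
        rw [norm_mul, hac_def, Complex.norm_conj] at habs1
        nlinarith [norm_nonneg ξ, norm_nonneg a]
      have hd2 : (1 : ℂ) - a * ac ≠ 0 := by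
        intro hh
        have : a * ac = 1 := by linear_combination -hh
        have habs1 : ‖a * ac‖ = 1 := by rw [this]; simp
        rw [norm_mul, hac_def, Complex.norm_conj] at habs1
        nlinarith [norm_nonneg a]
      have hsa : ‖σ₀ ξ‖ < 1 := by
        rw [hform ξ hξ]; exact abs_mobius_lt lam a ξ hlam ha hξa
      have hs0 : ‖σ₀ 0‖ < 1 := by
        rw [hσ0]; rw [norm_neg, norm_mul, hlam, one_mul]; exact ha
      have e1 : deriv F (σ₀ ξ) = K * σ₀ ξ / (1 + c * σ₀ ξ) := (hd _ hsa).deriv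
      have e0 : deriv F (σ₀ 0) = K * σ₀ 0 / (1 + c * σ₀ 0) := (hd _ hs0).deriv
      have v0 : deriv F (σ₀ 0) = -a := by
        rw [e0, hσ0]
        have hden0 : 1 + c * -(lam * a) = 1 - a * ac := by
          rw [hc_def]; linear_combination (-(ac * a)) * hll
        rw [hden0, hK_def]
        have hnum : lc * (1 - a * ac) * -(lam * a) = -a * (1 - a * ac) := by
          linear_combination (-(a) * (1 - a * ac)) * hll
        rw [hnum, mul_div_assoc, div_self hd2, mul_one]
      have v1 : deriv F (σ₀ ξ) = ξ - a := by
        rw [e1, hform ξ hξ]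
        have hden1 : 1 + c * (lam * (ξ - a) / (1 - ac * ξ)) = (1 - a * ac) / (1 - ac * ξ) := by
          rw [hc_def]
          field_simp
          linear_combination (ac * ξ - ac * a) * hll
        rw [hden1, hK_def]
        have hstep : lc * (1 - a * ac) * (lam * (ξ - a) / (1 - ac * ξ))
            = (ξ - a) * (1 - a * ac) / (1 - ac * ξ) := by
          field_simp
          linear_combination (ξ - a) * hll
        rw [hstep]
        field_simp
        rw [mul_div_assoc, div_self (by rwa [mul_comm] : (1:ℂ) - ξ * ac ≠ 0), mul_one]
      rw [v1, v0]; ring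
    have htest := machine α₀ σ₀ h F 1 hmem hFd1
    -- differentiate the resulting identity on the disc
    have hder : ∀ z ∈ unitDisc, eexp * z = K * z / (1 + c * z) := by
      intro z hz
      have hz' : ‖z‖ < 1 := (mem_unitDisc_iff z).1 hz
      have hEqOn : Set.EqOn (fun w : ℂ => eexp * (w ^ 2 / ((1:ℕ) + 1 : ℂ))) F unitDisc := by
        intro w hw
        exact htest w hw
      have hopen : IsOpen unitDisc := Metric.isOpen_ball
      have hev : (fun w : ℂ => eexp * (w ^ 2 / ((1:ℕ) + 1 : ℂ))) =ᶠ[nhds z] F :=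
        Filter.eventuallyEq_of_mem (hopen.mem_nhds hz) hEqOn
      have hL : HasDerivAt (fun w : ℂ => eexp * (w ^ 2 / ((1:ℕ) + 1 : ℂ))) (eexp * z) z := by
        have := ((hasDerivAt_pow 2 z).div_const ((1:ℕ) + 1 : ℂ)).const_mul eexp
        refine this.congr_deriv ?_
        push_cast
        ring
      calc eexp * z = deriv (fun w : ℂ => eexp * (w ^ 2 / ((1:ℕ) + 1 : ℂ))) z := hL.deriv.symm
        _ = deriv F z := hev.deriv_eq
        _ = K * z / (1 + c * z) := (hd z hz').deriv
    have hden1 : (1 : ℂ) + c * (1/2) ≠ 0 := by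
      intro hh
      have : c = -2 := by linear_combination 2 * hh
      rw [this] at hca
      simp at hca
    have hden2 : (1 : ℂ) + c * (-1/2) ≠ 0 := by
      intro hh
      have : c = 2 := by linear_combination -2 * hh
      rw [this] at hca
      simp at hca
    have e1 := hder (1/2) hhalfmem
    have e2 := hder (-1/2) (by convert hmhalfmem using 2)
    have e1'' := congrArg (fun x => x * (1 + c * (1/2))) e1
    rw [div_mul_cancel₀ _ hden1] at e1''
    have e1' : eexp * (1 + c * (1/2)) = K := by linear_combination 2 * e1''
    have e2'' := congrArg (fun x => x * (1 + c * (-1/2))) e2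
    rw [div_mul_cancel₀ _ hden2] at e2''
    have e2' : eexp * (1 + c * (-1/2)) = K := by linear_combination -2 * e2''
    have hcz : eexp * c = 0 := by linear_combination e1' - e2'
    rcases mul_eq_zero.mp hcz with hh | hh
    · exact heexp hh
    · exact hc0 hh
  -- Step 2 : with a = 0, σ₀ z = lam * z
  have hform' : ∀ z ∈ unitDisc, σ₀ z = lam * z := by
    intro z hz
    have hac0 : ac = 0 := by rw [hac_def, haz, map_zero]
    rw [hform z hz, haz, hac0]
    simp
  have hσ0' : σ₀ 0 = 0 := by rw [hform' 0 h0mem, mul_zero]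
  -- test function F1 = lc z²/2
  set F1 := fun z : ℂ => lc * z ^ 2 / 2 with hF1_def
  have hd1 : ∀ w : ℂ, HasDerivAt F1 (lc * w) w := by
    intro w
    have := ((hasDerivAt_pow 2 w).const_mul lc).div_const 2
    refine this.congr_deriv ?_
    ring
  have hmem1 : MemZ01 F1 := by
    apply memZ01_helper F1 2 (by norm_num)
    · exact fun w _ => ((hd1 w).differentiableAt).differentiableWithinAt
    · simp [hF1_def]
    · rw [(hd1 0).deriv]; simp
  have hFd1 : ∀ ξ ∈ unitDisc, deriv F1 (σ₀ ξ) - deriv F1 (σ₀ 0) = ξ ^ 1 := by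
    intro ξ hξ
    rw [(hd1 _).deriv, (hd1 _).deriv, hform' ξ hξ, hσ0']
    linear_combination ξ * hll
  have ht1 := machine α₀ σ₀ h F1 1 hmem1 hFd1 (1/2) hhalfmem
  -- test function F2 = lc² z³/3
  set F2 := fun z : ℂ => lc ^ 2 * z ^ 3 / 3 with hF2_def
  have hd2 : ∀ w : ℂ, HasDerivAt F2 (lc ^ 2 * w ^ 2) w := by
    intro w
    have := ((hasDerivAt_pow 3 w).const_mul (lc ^ 2)).div_const 3
    refine this.congr_deriv ?_
    push_cast
    ring
  have hmem2 : MemZ01 F2 := by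
    apply memZ01_helper F2 2 (by norm_num)
    · exact fun w _ => ((hd2 w).differentiableAt).differentiableWithinAt
    · simp [hF2_def]
    · rw [(hd2 0).deriv]; simp
  have hFd2 : ∀ ξ ∈ unitDisc, deriv F2 (σ₀ ξ) - deriv F2 (σ₀ 0) = ξ ^ 2 := by
    intro ξ hξ
    rw [(hd2 _).deriv, (hd2 _).deriv, hform' ξ hξ, hσ0']
    linear_combination (ξ ^ 2 * (lam * lc + 1)) * hll
  have ht2 := machine α₀ σ₀ h F2 2 hmem2 hFd2 (1/2) hhalfmem
  -- extract : eexp = lc and eexp = lc²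
  simp only [hF1_def] at ht1
  simp only [hF2_def] at ht2
  have heq1 : eexp = lc := by
    push_cast at ht1
    linear_combination 8 * ht1
  have heq2 : eexp = lc ^ 2 := by
    push_cast at ht2
    linear_combination 24 * ht2
  have hlc1 : lc = 1 := by
    have : lc * (lc - 1) = 0 := by
      linear_combination heq1 - heq2
    rcases mul_eq_zero.mp this with hh | hh
    · rw [hh, mul_zero] at hll
      exact absurd hll.symm one_ne_zero
    · linear_combination hh
  have hlam1 : lam = 1 := by
    have := hll
    rw [hlc1, mul_one] at this
    exact this
  refine ⟨by rw [heq1, hlc1], fun z hz => ?_⟩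
  rw [hform' z hz, hlam1, one_mul]
end
end
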